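/- arXiv:2109.15210 — 2 statements merged into one kernel-verified Lean document; each statement's English description precedes it below -/
import Mathlib

section
/- Let G be a group with left-invariant metric d, Γ ≤ G with fundamental domain V satisfying V ⊆ B(e, r₊). For a bounded set B ⊆ G define the inner Γ-approximation B_Γ := (B ∩ Γ)·V. Then B_{−r₊} ⊆ B_Γ ⊆ B_{+r₊}, where B_{−r} = {x ∈ B : B(x,r) ⊆ B} and B_{+r} = ∪_{x∈B} B(x,r). -/
open Pointwise Metric

/-- The inner `Γ`-approximation `B_Γ = (B ∩ Γ)·V` of a bounded set `B`
satisfies `B_{−r₊} ⊆ B_Γ ⊆ B_{+r₊}`. -/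
theorem stmt11 {G : Type*} [Group G] [MetricSpace G]
    (hinv : ∀ g x y : G, dist (g * x) (g * y) = dist x y)
    (Γ : Subgroup G) (V : Set G)
    (hfd : ∀ g : G, ∃! γ : G, γ ∈ Γ ∧ ∃ v ∈ V, g = γ * v)
    (r : ℝ) (hr : 0 < r) (hVb : V ⊆ ball (1 : G) r)
    (B : Set G) (hB : Bornology.IsBounded B) :
    {x ∈ B | ball x r ⊆ B} ⊆ (B ∩ (Γ : Set G)) * V ∧
    (B ∩ (Γ : Set G)) * V ⊆ ⋃ x ∈ B, ball x r := by
  constructor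
  · rintro x ⟨hxB, hball⟩
    obtain ⟨γ, ⟨hγΓ, v, hvV, hxv⟩, -⟩ := hfd x
    have hdist : dist γ x < r := by
      rw [hxv]
      have : dist γ (γ * v) = dist 1 v := by
        have := hinv γ 1 v; simpa using this
      rw [this, dist_comm]
      simpa [dist_comm] using hVb hvV
    have hγB : γ ∈ B := hball (by simpa [mem_ball, dist_comm] using hdist)
    exact ⟨γ, ⟨hγB, hγΓ⟩, v, hvV, hxv.symm⟩
  · rintro y ⟨γ, ⟨hγB, -⟩, v, hvV, rfl⟩
    refine Set.mem_biUnion hγB ?_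
    have : dist γ (γ * v) = dist 1 v := by simpa using hinv γ 1 v
    have hv : dist 1 v < r := by simpa [dist_comm] using hVb hvV
    simpa [mem_ball, dist_comm, this] using hv
end

section
/- Let G_H be a group, β : G_H × G_H → ℝ^m a normalized cocycle, and G = G_H ×_β ℝ^m the corresponding central extension. Let Γ_H ≤ G_H and Γ₀ ≤ ℝ^m be subgroups with β(Γ_H × Γ_H) ⊆ Γ₀, and let Γ = Γ_H ×_β Γ₀ ≤ G. If V_H is a fundamental domain for Γ_H in G_H and V₀ is a fundamental domain for Γ₀ in ℝ^m, then V := V_H × V₀ is a fundamental domain for Γ in G. -/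
/-- If `V_H` and `V₀` are fundamental domains for `Γ_H ≤ G_H` and `Γ₀ ≤ ℝ^m`,
then `V_H × V₀` is a fundamental domain for `Γ_H ×_β Γ₀` in the central
extension `G_H ×_β ℝ^m`. -/
theorem stmt13 {H : Type*} [Group H] (m : ℕ) (β : H → H → (Fin m → ℝ))
    (hcoc : ∀ g₁ g₂ g₃ : H, β g₂ g₃ + β g₁ (g₂ * g₃) = β (g₁ * g₂) g₃ + β g₁ g₂)
    (hnorm : β 1 1 = 0)
    (ΓH : Subgroup H) (Γ₀ : AddSubgroup (Fin m → ℝ))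
    (hβΓ : ∀ γ ∈ ΓH, ∀ γ' ∈ ΓH, β γ γ' ∈ Γ₀)
    (VH : Set H) (V₀ : Set (Fin m → ℝ))
    (hVH : ∀ g : H, ∃! γ : H, γ ∈ ΓH ∧ ∃ v ∈ VH, g = γ * v)
    (hV₀ : ∀ x : Fin m → ℝ, ∃! c : Fin m → ℝ, c ∈ Γ₀ ∧ ∃ w ∈ V₀, x = c + w) :
    ∀ p : H × (Fin m → ℝ), ∃! q : H × (Fin m → ℝ),
      (q.1 ∈ ΓH ∧ q.2 ∈ Γ₀) ∧ ∃ v ∈ VH, ∃ w ∈ V₀, p = (q.1 * v, q.2 + w + β q.1 v) := by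
  rintro ⟨g, x⟩
  obtain ⟨γ, ⟨hγ, v, hv, hgv⟩, hγuniq⟩ := hVH g
  obtain ⟨c, ⟨hc, w, hw, hxw⟩, hcuniq⟩ := hV₀ (x - β γ v)
  refine ⟨(γ, c), ⟨⟨hγ, hc⟩, v, hv, w, hw, ?_⟩, ?_⟩
  · simp only [Prod.mk.injEq]
    exact ⟨hgv, by rw [sub_eq_iff_eq_add.mp hxw]⟩
  · rintro ⟨γ', c'⟩ ⟨⟨hγ', hc'⟩, v', hv', w', hw', hpq⟩
    simp only [Prod.mk.injEq] at hpq
    obtain ⟨hg', hx'⟩ := hpq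
    have hγe : γ' = γ := hγuniq γ' ⟨hγ', v', hv', hg'⟩
    subst hγe
    have hve : v' = v := mul_left_cancel (hg'.symm.trans hgv)
    subst hve
    have hce : c' = c := hcuniq c' ⟨hc', w', hw', by rw [hx']; ring⟩
    simp [hce]
end
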